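/- Let G ≤ Aut(T) be a finitely generated regular branch group containing a finite subgroup Q that fixes no boundary point of T (for every ξ ∈ ∂T some element of Q moves some finite initial segment of ξ). Then the set of weakly maximal subgroups of G that contain Q and are not parabolic (not equal to the stabilizer in G of any boundary point) is uncountable. -/

import Mathlib

/-- Vertices of the `d`-regular rooted tree: finite words over `Fin d`. -/
abbrev Vtx (d : ℕ) := List (Fin d)

/-- A permutation of the vertex set is a tree automorphism if it fixes the root and
maps children of a vertex to children of its image. -/
def IsTreeAut (d : ℕ) (g : Equiv.Perm (Vtx d)) : Prop :=
  g [] = [] ∧ ∀ (v : Vtx d) (x : Fin d), ∃ y : Fin d, g (v ++ [x]) = g v ++ [y]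

/-- The initial raySegment of length `n` of a boundary point `ξ : ℕ → Fin d`. -/
def raySegment {d : ℕ} (ξ : ℕ → Fin d) (n : ℕ) : Vtx d := List.ofFn fun i : Fin n => ξ i

/-- The vertices at level `n`. -/
abbrev Level (d n : ℕ) := {v : Vtx d // v.length = n}

/-- A group of tree automorphisms is spherically transitive if it acts transitively on
each level. -/
def SphericallyTransitive {d : ℕ} (G : Subgroup (Equiv.Perm (Vtx d))) : Prop :=
  ∀ u v : Vtx d, u.length = v.length → ∃ g ∈ G, g u = v

/-- A group of tree automorphisms is self-similar if all sections of its elements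
belong to it. -/
def SelfSimilar {d : ℕ} (G : Subgroup (Equiv.Perm (Vtx d))) : Prop :=
  ∀ g ∈ G, ∀ v : Vtx d, ∃ h ∈ G, ∀ w : Vtx d, g (v ++ w) = g v ++ h w

/-- The image of `H ∩ Stab(n)` under the map `ψₙ` sending an automorphism fixing level `n`
to the tuple of its sections at the vertices of level `n`. -/
def psiImage {d : ℕ} (H : Subgroup (Equiv.Perm (Vtx d))) (n : ℕ) :
    Subgroup (Level d n → Equiv.Perm (Vtx d)) where
  carrier := {h | ∃ g ∈ H, (∀ v : Level d n, g v.1 = v.1) ∧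
      ∀ (v : Level d n) (w : Vtx d), g (v.1 ++ w) = v.1 ++ h v w}
  one_mem' := ⟨1, H.one_mem, fun _ => rfl, fun _ _ => rfl⟩
  mul_mem' := by
    rintro a b ⟨g, hg, hgf, hga⟩ ⟨g', hg', hg'f, hg'a⟩
    refine ⟨g * g', H.mul_mem hg hg', fun v => ?_, fun v w => ?_⟩
    · rw [Equiv.Perm.mul_apply, hg'f v, hgf v]
    · rw [Equiv.Perm.mul_apply, hg'a v w, hga v (b v w)]; rfl
  inv_mem' := by
    rintro a ⟨g, hg, hgf, hga⟩
    refine ⟨g⁻¹, H.inv_mem hg, fun v => ?_, fun v w => ?_⟩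
    · apply g.injective
      rw [show g (g⁻¹ v.1) = v.1 from g.apply_symm_apply _, hgf v]
    · apply g.injective
      rw [show g (g⁻¹ (v.1 ++ w)) = v.1 ++ w from g.apply_symm_apply _, hga v (a⁻¹ v w)]
      show v.1 ++ w = v.1 ++ a v ((a v)⁻¹ w)
      rw [show a v ((a v)⁻¹ w) = w from (a v).apply_symm_apply _]

/-- `G ≤ Aut(T)` is regular branch over `K` if it consists of tree automorphisms, is
spherically transitive and self-similar, and `K ≤ G` is a finite-index subgroup such that
`ψ₁(K ∩ Stab(1))` contains `K^d` as a subgroup of finite index. -/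
structure IsRegularBranch (d : ℕ) (G K : Subgroup (Equiv.Perm (Vtx d))) : Prop where
  treeAut : ∀ g ∈ G, IsTreeAut d g
  transitive : SphericallyTransitive G
  selfSimilar : SelfSimilar G
  le : K ≤ G
  relindex_ne_zero : K.relIndex G ≠ 0
  pi_le : Subgroup.pi Set.univ (fun _ : Level d 1 => K) ≤ psiImage K 1
  pi_relindex_ne_zero :
    (Subgroup.pi Set.univ (fun _ : Level d 1 => K)).relIndex (psiImage K 1) ≠ 0

/-- `H` is a weakly maximal subgroup of (the subgroup) `G` if `H ≤ G`, `H` has infinite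
index in `G`, and every subgroup of `G` strictly containing `H` has finite index in `G`. -/
def IsWeaklyMaximalIn {P : Type*} [Group P] (G H : Subgroup P) : Prop :=
  H ≤ G ∧ H.relIndex G = 0 ∧
    ∀ M : Subgroup P, M ≤ G → H < M → M.relIndex G ≠ 0

/-- The stabilizer in `G` of a boundary point `ξ` (a parabolic subgroup). -/
def rayStab {d : ℕ} (G : Subgroup (Equiv.Perm (Vtx d))) (ξ : ℕ → Fin d) :
    Subgroup (Equiv.Perm (Vtx d)) where
  carrier := {g | g ∈ G ∧ ∀ n : ℕ, g (raySegment ξ n) = raySegment ξ n}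
  one_mem' := ⟨G.one_mem, fun _ => rfl⟩
  mul_mem' := by
    rintro a b ⟨ha, ha2⟩ ⟨hb, hb2⟩
    exact ⟨G.mul_mem ha hb, fun n => by rw [Equiv.Perm.mul_apply, hb2 n, ha2 n]⟩
  inv_mem' := by
    rintro a ⟨ha, ha2⟩
    refine ⟨G.inv_mem ha, fun n => ?_⟩
    conv_lhs => rw [← ha2 n]
    exact a.symm_apply_apply (raySegment ξ n)

/-- The rigid stabilizer of a vertex `v` in `G`: elements of `G` fixing every vertex not
having `v` as a prefix. -/
def rist {d : ℕ} (G : Subgroup (Equiv.Perm (Vtx d))) (v : Vtx d) :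
    Subgroup (Equiv.Perm (Vtx d)) where
  carrier := {g | g ∈ G ∧ ∀ w : Vtx d, ¬ v <+: w → g w = w}
  one_mem' := ⟨G.one_mem, fun _ _ => rfl⟩
  mul_mem' := by
    rintro a b ⟨ha, ha2⟩ ⟨hb, hb2⟩
    exact ⟨G.mul_mem ha hb, fun w hw => by rw [Equiv.Perm.mul_apply, hb2 w hw, ha2 w hw]⟩
  inv_mem' := by
    rintro a ⟨ha, ha2⟩
    refine ⟨G.inv_mem ha, fun w hw => ?_⟩
    conv_lhs => rw [← ha2 w hw]
    exact a.symm_apply_apply w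

lemma perm_apply_inv_self {α : Type*} (f : Equiv.Perm α) (x : α) : f (f⁻¹ x) = x :=
  f.apply_symm_apply x

lemma perm_inv_apply_self {α : Type*} (f : Equiv.Perm α) (x : α) : f⁻¹ (f x) = x :=
  f.symm_apply_apply x

section AuxBasic

open Equiv

variable {d : ℕ}

lemma treeAut_length {g : Equiv.Perm (Vtx d)} (hg : IsTreeAut d g) :
    ∀ v : Vtx d, (g v).length = v.length := by
  intro v
  induction v using List.reverseRecOn with
  | nil => rw [hg.1]
  | append_singleton l x ih =>
    obtain ⟨y, hy⟩ := hg.2 l x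
    rw [hy]; simp [ih]

lemma treeAut_append {g : Equiv.Perm (Vtx d)} (hg : IsTreeAut d g) (v : Vtx d) :
    ∀ w : Vtx d, ∃ s : Vtx d, s.length = w.length ∧ g (v ++ w) = g v ++ s := by
  intro w
  induction w using List.reverseRecOn with
  | nil => exact ⟨[], rfl, by simp⟩
  | append_singleton u x ih =>
    obtain ⟨s, hs, hgs⟩ := ih
    obtain ⟨y, hy⟩ := hg.2 (v ++ u) x
    refine ⟨s ++ [y], by simp [hs], ?_⟩
    rw [← List.append_assoc, hy, hgs, List.append_assoc]

lemma treeAut_fix_prefix {g : Equiv.Perm (Vtx d)} (hg : IsTreeAut d g) {v w : Vtx d}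
    (h : g (v ++ w) = v ++ w) : g v = v := by
  obtain ⟨s, hs, hgs⟩ := treeAut_append hg v w
  rw [hgs] at h
  exact (List.append_inj h (treeAut_length hg v)).1

lemma eq_ofFn_get {n : ℕ} (v : Vtx d) (h : v.length = n) :
    v = List.ofFn (fun i : Fin n => v.get (Fin.cast h.symm i)) := by
  subst h; simp

lemma level_finite (n : ℕ) : Finite (Level d n) := by
  refine Finite.of_injective (fun v : Level d n => fun i : Fin n => v.1.get (Fin.cast v.2.symm i)) ?_
  intro v w hvw
  ext1
  rw [eq_ofFn_get v.1 v.2, eq_ofFn_get w.1 w.2]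
  exact congrArg List.ofFn hvw

lemma setOf_length_finite (n : ℕ) : {v : Vtx d | v.length = n}.Finite := by
  have : {v : Vtx d | v.length = n} = Set.range (fun t : Fin n → Fin d => List.ofFn t) := by
    ext v
    constructor
    · intro hv
      exact ⟨fun i => v.get (Fin.cast hv.symm i), (eq_ofFn_get v hv).symm⟩
    · rintro ⟨t, rfl⟩
      simp [List.length_ofFn]
  rw [this]
  exact Set.finite_range _

lemma sec_unique {v : Vtx d} {g k k' : Equiv.Perm (Vtx d)}
    (h : ∀ w, g (v ++ w) = v ++ k w) (h' : ∀ w, g (v ++ w) = v ++ k' w) : k = k' := by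
  apply Equiv.ext
  intro w
  exact List.append_cancel_left ((h w).symm.trans (h' w))

end AuxBasic
section AuxBranch

variable {d : ℕ} {G K : Subgroup (Equiv.Perm (Vtx d))}

/-- The copy of `K` supported on the subtree at `v`. -/
def KAt (K : Subgroup (Equiv.Perm (Vtx d))) (v : Vtx d) : Subgroup (Equiv.Perm (Vtx d)) where
  carrier := {g | (∀ w, ¬ v <+: w → g w = w) ∧ ∃ k ∈ K, ∀ w, g (v ++ w) = v ++ k w}
  one_mem' := ⟨fun _ _ => rfl, 1, K.one_mem, fun _ => rfl⟩
  mul_mem' := by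
    rintro a b ⟨ha1, ka, hka, ha2⟩ ⟨hb1, kb, hkb, hb2⟩
    refine ⟨fun w hw => ?_, ka * kb, K.mul_mem hka hkb, fun w => ?_⟩
    · rw [Equiv.Perm.mul_apply, hb1 w hw, ha1 w hw]
    · rw [Equiv.Perm.mul_apply, hb2 w, ha2 (kb w)]; rfl
  inv_mem' := by
    rintro a ⟨ha1, ka, hka, ha2⟩
    refine ⟨fun w hw => ?_, ka⁻¹, K.inv_mem hka, fun w => ?_⟩
    · conv_lhs => rw [← ha1 w hw]
      exact perm_inv_apply_self a w
    · apply a.injective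
      rw [perm_apply_inv_self, ha2 (ka⁻¹ w)]
      show v ++ w = v ++ ka (ka⁻¹ w)
      rw [perm_apply_inv_self]

lemma exists_level1_copy (hGK : IsRegularBranch d G K) (x : Fin d) {k : Equiv.Perm (Vtx d)}
    (hk : k ∈ K) :
    ∃ g ∈ K, (∀ w, ¬ [x] <+: w → g w = w) ∧ ∀ w, g ([x] ++ w) = [x] ++ k w := by
  classical
  set f : Level d 1 → Equiv.Perm (Vtx d) := fun u => if u.1 = [x] then k else 1 with hf
  have hfmem : f ∈ Subgroup.pi Set.univ (fun _ : Level d 1 => K) := by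
    intro u _
    by_cases h : u.1 = [x] <;> simp [hf, h, K.one_mem, hk]
  obtain ⟨g, hgK, hgfix, hgsec⟩ := hGK.pi_le hfmem
  refine ⟨g, hgK, fun w hw => ?_, fun w => ?_⟩
  · match w with
    | [] => exact (hGK.treeAut g (hGK.le hgK)).1
    | y :: t =>
      have hyx : y ≠ x := by
        rintro rfl
        exact hw ⟨t, rfl⟩
      have := hgsec ⟨[y], rfl⟩ t
      simp only [hf] at this
      rw [if_neg (by simpa using hyx)] at this
      simpa using this
  · have := hgsec ⟨[x], rfl⟩ w
    simp only [hf, if_pos rfl] at this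
    exact this

lemma exists_ristCopy (hGK : IsRegularBranch d G K) :
    ∀ (v : Vtx d), ∀ k ∈ K,
      ∃ g ∈ K, (∀ w, ¬ v <+: w → g w = w) ∧ ∀ w, g (v ++ w) = v ++ k w := by
  intro v
  induction v using List.reverseRecOn with
  | nil =>
    intro k hk
    exact ⟨k, hk, fun w hw => absurd (List.nil_prefix) hw, fun w => by simp⟩
  | append_singleton v x ih =>
    intro k hk
    obtain ⟨g1, hg1K, hg1supp, hg1sec⟩ := exists_level1_copy hGK x hk
    obtain ⟨h, hhK, hhsupp, hhsec⟩ := ih g1 hg1K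
    refine ⟨h, hhK, fun w hw => ?_, fun w => ?_⟩
    · by_cases hvw : v <+: w
      · obtain ⟨t, rfl⟩ := hvw
        rw [hhsec t, hg1supp t (fun hxt => hw (by
          obtain ⟨u, rfl⟩ := hxt
          exact ⟨u, by simp⟩))]
      · exact hhsupp w hvw
    · have := hhsec ([x] ++ w)
      rw [hg1sec w] at this
      rw [List.append_assoc]
      rw [this, List.append_assoc]

/-- Membership in `KAt` determines membership in `K`. -/
lemma KAt_le_K (hGK : IsRegularBranch d G K) (v : Vtx d) : KAt K v ≤ K := by
  rintro g ⟨hsupp, k, hk, hsec⟩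
  obtain ⟨g', hg'K, hsupp', hsec'⟩ := exists_ristCopy hGK v k hk
  have : g = g' := by
    apply Equiv.ext
    intro w
    by_cases hvw : v <+: w
    · obtain ⟨t, rfl⟩ := hvw
      rw [hsec t, hsec' t]
    · rw [hsupp w hvw, hsupp' w hvw]
  rw [this]; exact hg'K

lemma KAt_le_rist (hGK : IsRegularBranch d G K) (v : Vtx d) : KAt K v ≤ rist G v := by
  intro g hg
  exact ⟨hGK.le (KAt_le_K hGK v hg), hg.1⟩

/-- The subgroup of permutations fixing everything up to level `n` and having
sections in `K` at level `n`. -/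
def Dn (K : Subgroup (Equiv.Perm (Vtx d))) (n : ℕ) : Subgroup (Equiv.Perm (Vtx d)) where
  carrier := {g | (∀ w : Vtx d, w.length ≤ n → g w = w) ∧
    ∀ v : Vtx d, v.length = n → ∃ k ∈ K, ∀ w, g (v ++ w) = v ++ k w}
  one_mem' := ⟨fun _ _ => rfl, fun _ _ => ⟨1, K.one_mem, fun _ => rfl⟩⟩
  mul_mem' := by
    rintro a b ⟨ha1, ha2⟩ ⟨hb1, hb2⟩
    refine ⟨fun w hw => ?_, fun v hv => ?_⟩
    · rw [Equiv.Perm.mul_apply, hb1 w hw, ha1 w hw]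
    · obtain ⟨ka, hka, hka2⟩ := ha2 v hv
      obtain ⟨kb, hkb, hkb2⟩ := hb2 v hv
      refine ⟨ka * kb, K.mul_mem hka hkb, fun w => ?_⟩
      rw [Equiv.Perm.mul_apply, hkb2 w, hka2 (kb w)]; rfl
  inv_mem' := by
    rintro a ⟨ha1, ha2⟩
    refine ⟨fun w hw => ?_, fun v hv => ?_⟩
    · conv_lhs => rw [← ha1 w hw]
      exact perm_inv_apply_self a w
    · obtain ⟨ka, hka, hka2⟩ := ha2 v hv
      refine ⟨ka⁻¹, K.inv_mem hka, fun w => ?_⟩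
      apply a.injective
      rw [perm_apply_inv_self, hka2 (ka⁻¹ w)]
      show v ++ w = v ++ ka (ka⁻¹ w)
      rw [perm_apply_inv_self]

lemma Dn_decomp_aux (hGK : IsRegularBranch d G K) (n : ℕ) {F : Set (Vtx d)} (hF : F.Finite) :
    (∀ v ∈ F, v.length = n) → ∀ g ∈ Dn K n, (∀ w, (∀ v ∈ F, ¬ v <+: w) → g w = w) →
      g ∈ ⨆ v : Level d n, KAt K v.1 := by
  refine Set.Finite.induction_on
    (motive := fun F _ => (∀ v ∈ F, v.length = n) → ∀ g ∈ Dn K n,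
      (∀ w, (∀ v ∈ F, ¬ v <+: w) → g w = w) → g ∈ ⨆ v : Level d n, KAt K v.1)
    F hF ?_ ?_
  · intro _ g _ hsupp
    have : g = 1 := Equiv.ext fun w => hsupp w (fun v hv => absurd hv (Set.notMem_empty v))
    rw [this]; exact Subgroup.one_mem _
  · intro a F ha hF ih
    intro hlen g hg hsupp
    have halen : a.length = n := hlen a (Set.mem_insert a F)
    obtain ⟨k, hk, hsec⟩ := hg.2 a halen
    obtain ⟨h, hhK, hhsupp, hhsec⟩ := exists_ristCopy hGK a k hk
    have hh_mem : h ∈ KAt K a := ⟨hhsupp, k, hk, hhsec⟩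
    have hhDn : h ∈ Dn K n := by
      refine ⟨fun w hw => ?_, fun v hv => ?_⟩
      · by_cases hwa : w = a
        · subst hwa
          have := hhsec []
          simpa [(hGK.treeAut k (hGK.le hk)).1] using this
        · refine hhsupp w (fun hpre => hwa ?_)
          have h1 : a.length ≤ w.length := hpre.length_le
          exact (hpre.eq_of_length (by omega)).symm
      · by_cases hva : v = a
        · subst hva; exact ⟨k, hk, hhsec⟩
        · refine ⟨1, K.one_mem, fun w => ?_⟩
          have : ¬ a <+: v ++ w := by
            intro hpre
            apply hva
            have : a = (v ++ w).take a.length := List.prefix_iff_eq_take.mp hpre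
            rw [halen, ← hv, List.take_left] at this
            exact this.symm
          simp [hhsupp _ this]
    have hg' : h⁻¹ * g ∈ Dn K n := Subgroup.mul_mem _ (Subgroup.inv_mem _ hhDn) hg
    have hsupp' : ∀ w, (∀ v ∈ F, ¬ v <+: w) → (h⁻¹ * g) w = w := by
      intro w hw
      by_cases haw : a <+: w
      · obtain ⟨t, rfl⟩ := haw
        show h⁻¹ (g (a ++ t)) = a ++ t
        rw [hsec t]
        apply h.injective
        rw [perm_apply_inv_self, hhsec]
      · have hgw : g w = w := hsupp w (by
          intro v hv
          rcases Set.mem_insert_iff.mp hv with rfl | hv'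
          · exact haw
          · exact hw v hv')
        show h⁻¹ (g w) = w
        rw [hgw]
        apply h.injective
        rw [perm_apply_inv_self, hhsupp w haw]
    have hmem' : h⁻¹ * g ∈ ⨆ v : Level d n, KAt K v.1 :=
      ih (fun v hv => hlen v (Set.mem_insert_of_mem a hv)) _ hg' hsupp'
    have : g = h * (h⁻¹ * g) := by group
    rw [this]
    exact Subgroup.mul_mem _ (le_iSup (fun v : Level d n => KAt K v.1) ⟨a, halen⟩ hh_mem) hmem'

lemma Dn_le_iSup_KAt (hGK : IsRegularBranch d G K) (n : ℕ) :
    Dn K n ≤ ⨆ v : Level d n, KAt K v.1 := by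
  intro g hg
  refine Dn_decomp_aux hGK n (setOf_length_finite n) (fun v hv => hv) g hg ?_
  intro w hw
  rcases le_or_gt w.length n with hle | hlt
  · rcases eq_or_lt_of_le hle with heq | hlt'
    · exact absurd (List.prefix_refl w) (hw w heq)
    · exact hg.1 w hle
  · exfalso
    refine hw (w.take n) ?_ (List.take_prefix n w)
    simp only [Set.mem_setOf_eq, List.length_take]
    omega

lemma Dn_le_K (hGK : IsRegularBranch d G K) (n : ℕ) : Dn K n ≤ K :=
  (Dn_le_iSup_KAt hGK n).trans (iSup_le fun v => KAt_le_K hGK v.1)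

end AuxBranch
section AuxIndex

variable {d : ℕ} {G K : Subgroup (Equiv.Perm (Vtx d))}

/-- If a function to a finite type separates cosets, the relative index is finite. -/
lemma relindex_ne_zero_of_inj {P : Type*} [Group P] {H L : Subgroup P} {β : Type*} [Finite β]
    (f : ↥L → β) (hf : ∀ g g' : ↥L, f g = f g' → g⁻¹ * g' ∈ H.subgroupOf L) :
    H.relIndex L ≠ 0 := by
  show (H.subgroupOf L).index ≠ 0
  rw [Subgroup.index_eq_card]
  have hfin : Finite (↥L ⧸ H.subgroupOf L) := by
    refine Finite.of_injective (fun q => f (Quotient.out q)) ?_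
    intro q q' h
    have := hf _ _ h
    rw [← QuotientGroup.eq] at this
    rwa [QuotientGroup.out_eq', QuotientGroup.out_eq'] at this
  exact Nat.card_ne_zero.mpr ⟨⟨(1 : ↥L)⟩, hfin⟩

open Classical in
noncomputable def secAt (g : Equiv.Perm (Vtx d)) (v : Vtx d) : Equiv.Perm (Vtx d) :=
  if h : ∃ k : Equiv.Perm (Vtx d), ∀ w, g (v ++ w) = v ++ k w then h.choose else 1

lemma secAt_spec {g : Equiv.Perm (Vtx d)} {v : Vtx d}
    (h : ∃ k : Equiv.Perm (Vtx d), ∀ w, g (v ++ w) = v ++ k w) :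
    ∀ w, g (v ++ w) = v ++ secAt g v w := by
  classical
  rw [secAt, dif_pos h]
  exact h.choose_spec

lemma secAt_eq {g k : Equiv.Perm (Vtx d)} {v : Vtx d} (hk : ∀ w, g (v ++ w) = v ++ k w) :
    secAt g v = k :=
  sec_unique (secAt_spec ⟨k, hk⟩) hk

lemma sec_inv_mul {g g' k k' : Equiv.Perm (Vtx d)} {v : Vtx d}
    (h : ∀ w, g (v ++ w) = v ++ k w) (h' : ∀ w, g' (v ++ w) = v ++ k' w) :
    ∀ w, (g⁻¹ * g') (v ++ w) = v ++ (k⁻¹ * k') w := by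
  intro w
  show g⁻¹ (g' (v ++ w)) = v ++ k⁻¹ (k' w)
  rw [h' w]
  apply g.injective
  rw [perm_apply_inv_self, h (k⁻¹ (k' w))]
  show v ++ k' w = v ++ k (k⁻¹ (k' w))
  rw [perm_apply_inv_self]

/-- The stabilizer of the first level in `G`. -/
def levOne (G : Subgroup (Equiv.Perm (Vtx d))) : Subgroup (Equiv.Perm (Vtx d)) where
  carrier := {g | g ∈ G ∧ ∀ x : Fin d, g [x] = [x]}
  one_mem' := ⟨G.one_mem, fun _ => rfl⟩
  mul_mem' := by
    rintro a b ⟨ha, ha2⟩ ⟨hb, hb2⟩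
    exact ⟨G.mul_mem ha hb, fun x => by rw [Equiv.Perm.mul_apply, hb2 x, ha2 x]⟩
  inv_mem' := by
    rintro a ⟨ha, ha2⟩
    refine ⟨G.inv_mem ha, fun x => ?_⟩
    conv_lhs => rw [← ha2 x]
    exact perm_inv_apply_self a [x]

lemma relindex_levOne (hGK : IsRegularBranch d G K) : (levOne G).relIndex G ≠ 0 := by
  have := level_finite (d := d) 1
  refine relindex_ne_zero_of_inj
    (fun g : ↥G => fun x : Fin d => (⟨g.1 [x], treeAut_length (hGK.treeAut g.1 g.2) [x]⟩ : Level d 1))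
    ?_
  intro g g' h
  refine ⟨Subgroup.mul_mem _ (Subgroup.inv_mem _ g.2) g'.2, fun x => ?_⟩
  have hx : g.1 [x] = g'.1 [x] := congrArg Subtype.val (congrFun h x)
  show g.1⁻¹ (g'.1 [x]) = [x]
  rw [← hx]
  exact perm_inv_apply_self g.1 [x]

end AuxIndex
section AuxIndex2

variable {d : ℕ} {G K : Subgroup (Equiv.Perm (Vtx d))}

lemma fix_inv {α : Type*} {g : Equiv.Perm α} {x : α} (h : g x = x) : g⁻¹ x = x := by
  apply g.injective
  rw [perm_apply_inv_self, h]

lemma sec_exists (hGK : IsRegularBranch d G K) {g : Equiv.Perm (Vtx d)} (hg : g ∈ G)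
    {v : Vtx d} (hfix : g v = v) :
    ∃ k : Equiv.Perm (Vtx d), ∀ w, g (v ++ w) = v ++ k w := by
  obtain ⟨h, _, hsec⟩ := hGK.selfSimilar g hg v
  exact ⟨h, fun w => by rw [hsec w, hfix]⟩

lemma exists_snoc_of_length_succ {n : ℕ} {w : Vtx d} (hw : w.length = n + 1) :
    ∃ (v : Vtx d) (x : Fin d), w = v ++ [x] ∧ v.length = n := by
  have hne : w ≠ [] := by intro h; rw [h] at hw; simp at hw
  refine ⟨w.dropLast, w.getLast hne, (List.dropLast_append_getLast hne).symm, ?_⟩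
  rw [List.length_dropLast, hw]
  omega

lemma secAt_mem_K {n : ℕ} {g : Equiv.Perm (Vtx d)} (hg : g ∈ Dn K n) {v : Vtx d}
    (hv : v.length = n) :
    (∀ w, g (v ++ w) = v ++ secAt g v w) ∧ secAt g v ∈ K := by
  obtain ⟨k, hkK, hk⟩ := hg.2 v hv
  rw [secAt_eq hk]
  exact ⟨hk, hkK⟩

lemma tau_mem (hGK : IsRegularBranch d G K) {g : Equiv.Perm (Vtx d)}
    (hg : g ∈ K ⊓ levOne G) :
    (fun u : Level d 1 => secAt g u.1) ∈ psiImage K 1 := by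
  obtain ⟨hgK, hgLev⟩ := Subgroup.mem_inf.mp hg
  have hfix : ∀ u : Level d 1, g u.1 = u.1 := by
    intro u
    obtain ⟨x, hx⟩ := List.length_eq_one_iff.mp u.2
    rw [hx]
    exact hgLev.2 x
  exact ⟨g, hgK, hfix, fun u w => secAt_spec (sec_exists hGK (hGK.le hgK) (hfix u)) w⟩

lemma Dn_le_inf (hGK : IsRegularBranch d G K) : Dn K 1 ≤ K ⊓ levOne G := by
  intro g hg
  have hgK := Dn_le_K hGK 1 hg
  exact Subgroup.mem_inf.mpr ⟨hgK, hGK.le hgK, fun x => hg.1 [x] (by simp)⟩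

lemma relindex_Dn_one (hGK : IsRegularBranch d G K) : (Dn K 1).relIndex G ≠ 0 := by
  have h1 : (K ⊓ levOne G).relIndex G ≠ 0 :=
    Subgroup.relIndex_inf_ne_zero hGK.relindex_ne_zero (relindex_levOne hGK)
  have hfin : Finite (↥(psiImage K 1) ⧸
      (Subgroup.pi Set.univ (fun _ : Level d 1 => K)).subgroupOf (psiImage K 1)) := by
    have hcard : Nat.card (↥(psiImage K 1) ⧸
        (Subgroup.pi Set.univ (fun _ : Level d 1 => K)).subgroupOf (psiImage K 1)) ≠ 0 := by
      rw [← Subgroup.index_eq_card]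
      exact hGK.pi_relindex_ne_zero
    exact (Nat.card_ne_zero.mp hcard).2
  have h2 : (Dn K 1).relIndex (K ⊓ levOne G) ≠ 0 := by
    refine relindex_ne_zero_of_inj
      (f := fun g : ↥(K ⊓ levOne G) =>
        (QuotientGroup.mk ⟨fun u : Level d 1 => secAt g.1 u.1, tau_mem hGK g.2⟩ :
          ↥(psiImage K 1) ⧸ (Subgroup.pi Set.univ (fun _ : Level d 1 => K)).subgroupOf
            (psiImage K 1))) ?_
    intro g g' h
    have hmem := Subgroup.mem_subgroupOf.mp (QuotientGroup.eq.mp h)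
    rw [Subgroup.mem_subgroupOf]
    obtain ⟨hgK, hgLev⟩ := Subgroup.mem_inf.mp g.2
    obtain ⟨hg'K, hg'Lev⟩ := Subgroup.mem_inf.mp g'.2
    have hfix : ∀ u : Level d 1, g.1 u.1 = u.1 := by
      intro u; obtain ⟨x, hx⟩ := List.length_eq_one_iff.mp u.2; rw [hx]; exact hgLev.2 x
    have hfix' : ∀ u : Level d 1, g'.1 u.1 = u.1 := by
      intro u; obtain ⟨x, hx⟩ := List.length_eq_one_iff.mp u.2; rw [hx]; exact hg'Lev.2 x
    refine ⟨?_, ?_⟩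
    · intro w hw
      show g.1⁻¹ (g'.1 w) = w
      match w with
      | [] =>
        rw [(hGK.treeAut g'.1 (hGK.le hg'K)).1]
        exact fix_inv (hGK.treeAut g.1 (hGK.le hgK)).1
      | [x] =>
        rw [hg'Lev.2 x]
        exact fix_inv (hgLev.2 x)
      | x :: y :: t => simp at hw
    · intro v hv
      have hcoord : ((fun u : Level d 1 => secAt g.1 u.1)⁻¹ *
          (fun u : Level d 1 => secAt g'.1 u.1)) ∈
          Subgroup.pi Set.univ (fun _ : Level d 1 => K) := hmem
      have hk := (Subgroup.mem_pi Set.univ).mp hcoord ⟨v, hv⟩ (Set.mem_univ _)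
      refine ⟨(secAt g.1 v)⁻¹ * secAt g'.1 v, hk, ?_⟩
      exact sec_inv_mul
        (secAt_spec (sec_exists hGK (hGK.le hgK) (hfix ⟨v, hv⟩)))
        (secAt_spec (sec_exists hGK (hGK.le hg'K) (hfix' ⟨v, hv⟩)))
  have hle2 : K ⊓ levOne G ≤ G := fun g hg => (Subgroup.mem_inf.mp hg).2.1
  rw [← Subgroup.relIndex_mul_relIndex (Dn K 1) (K ⊓ levOne G) G (Dn_le_inf hGK) hle2]
  exact Nat.mul_ne_zero h2 h1

lemma secAt_mem_Dn_one (hGK : IsRegularBranch d G K) {n : ℕ} {g : Equiv.Perm (Vtx d)}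
    (hg : g ∈ Dn K (n + 1)) {v : Vtx d} (hv : v.length = n) :
    (∀ w, g (v ++ w) = v ++ secAt g v w) ∧ secAt g v ∈ Dn K 1 := by
  have hgG : g ∈ G := hGK.le (Dn_le_K hGK (n + 1) hg)
  have hfix : g v = v := hg.1 v (by omega)
  have hspec := secAt_spec (sec_exists hGK hgG hfix)
  refine ⟨hspec, ?_, ?_⟩
  · intro w hw
    match w with
    | [] =>
      have h0 := hspec []
      rw [List.append_nil, hfix] at h0
      nth_rewrite 1 [← List.append_nil v] at h0
      exact (List.append_cancel_left h0).symm
    | [x] =>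
      have h1 := hspec [x]
      rw [hg.1 (v ++ [x]) (by simp [hv])] at h1
      exact (List.append_cancel_left h1).symm
    | x :: y :: t => simp at hw
  · intro u hu
    obtain ⟨x, rfl⟩ := List.length_eq_one_iff.mp hu
    obtain ⟨k, hkK, hk⟩ := hg.2 (v ++ [x]) (by simp [hv])
    refine ⟨k, hkK, fun w => ?_⟩
    have h1 := hspec ([x] ++ w)
    rw [← List.append_assoc, hk w, List.append_assoc] at h1
    exact (List.append_cancel_left h1).symm

lemma Dn_succ_le (hGK : IsRegularBranch d G K) (n : ℕ) : Dn K (n + 1) ≤ Dn K n := by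
  intro g hg
  refine ⟨fun w hw => hg.1 w (by omega), fun v hv => ?_⟩
  obtain ⟨hspec, hmem⟩ := secAt_mem_Dn_one hGK hg hv
  exact ⟨secAt g v, Dn_le_K hGK 1 hmem, hspec⟩

lemma relindex_Dn_succ (hGK : IsRegularBranch d G K) (n : ℕ)
    (hprev : (Dn K n).relIndex G ≠ 0) : (Dn K (n + 1)).relIndex G ≠ 0 := by
  have hKle : Dn K n ≤ G := fun g hg => hGK.le (Dn_le_K hGK n hg)
  have hDnK : (Dn K 1).relIndex K ≠ 0 := by
    intro h0
    have h := Subgroup.relIndex_mul_relIndex (Dn K 1) K G (Dn_le_K hGK 1) hGK.le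
    rw [h0, zero_mul] at h
    exact relindex_Dn_one hGK h.symm
  have hfinK : Finite (↥K ⧸ (Dn K 1).subgroupOf K) := by
    have hcard : Nat.card (↥K ⧸ (Dn K 1).subgroupOf K) ≠ 0 := by
      rw [← Subgroup.index_eq_card]; exact hDnK
    exact (Nat.card_ne_zero.mp hcard).2
  have hlevfin := level_finite (d := d) n
  have h2 : (Dn K (n + 1)).relIndex (Dn K n) ≠ 0 := by
    refine relindex_ne_zero_of_inj
      (f := fun g : ↥(Dn K n) => fun u : Level d n =>
        (QuotientGroup.mk ⟨secAt g.1 u.1, (secAt_mem_K g.2 u.2).2⟩ :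
          ↥K ⧸ (Dn K 1).subgroupOf K)) ?_
    intro g g' h
    rw [Subgroup.mem_subgroupOf]
    have hcoord : ∀ u : Level d n, (secAt g.1 u.1)⁻¹ * secAt g'.1 u.1 ∈ Dn K 1 := by
      intro u
      exact Subgroup.mem_subgroupOf.mp (QuotientGroup.eq.mp (congrFun h u))
    refine ⟨?_, ?_⟩
    · intro w hw
      rcases Nat.lt_or_ge w.length (n + 1) with hlt | hge
      · show g.1⁻¹ (g'.1 w) = w
        rw [g'.2.1 w (by omega)]
        exact fix_inv (g.2.1 w (by omega))
      · have hlen : w.length = n + 1 := by omega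
        obtain ⟨v, x, rfl, hvlen⟩ := exists_snoc_of_length_succ hlen
        have hc := hcoord ⟨v, hvlen⟩
        have hsim := sec_inv_mul (secAt_mem_K g.2 hvlen).1 (secAt_mem_K g'.2 hvlen).1 [x]
        show ((g.1)⁻¹ * g'.1) (v ++ [x]) = v ++ [x]
        rw [hsim, hc.1 [x] (by simp)]
    · intro u hu
      obtain ⟨v, x, rfl, hvlen⟩ := exists_snoc_of_length_succ hu
      have hc := hcoord ⟨v, hvlen⟩
      obtain ⟨k, hkK, hks⟩ := hc.2 [x] (by simp)
      refine ⟨k, hkK, fun t => ?_⟩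
      have hsim := sec_inv_mul (secAt_mem_K g.2 hvlen).1 (secAt_mem_K g'.2 hvlen).1 ([x] ++ t)
      show ((g.1)⁻¹ * g'.1) (v ++ [x] ++ t) = v ++ [x] ++ k t
      rw [List.append_assoc, hsim, hks t, ← List.append_assoc]
  rw [← Subgroup.relIndex_mul_relIndex (Dn K (n + 1)) (Dn K n) G (Dn_succ_le hGK n) hKle]
  exact Nat.mul_ne_zero h2 hprev

lemma relindex_Dn (hGK : IsRegularBranch d G K) : ∀ n : ℕ, (Dn K (n + 1)).relIndex G ≠ 0 := by
  intro n
  induction n with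
  | zero => exact relindex_Dn_one hGK
  | succ m ih => exact relindex_Dn_succ hGK (m + 1) ih

end AuxIndex2
section AuxZorn

variable {d : ℕ} {G K : Subgroup (Equiv.Perm (Vtx d))}

lemma exists_weaklyMaximal {P : Type*} [Group P] (G : Subgroup P) (hfg : Group.FG ↥G)
    (H : Subgroup P) (hHG : H ≤ G) (hH : H.relIndex G = 0) :
    ∃ W : Subgroup P, H ≤ W ∧ IsWeaklyMaximalIn G W := by
  classical
  set S : Set (Subgroup P) := {M | H ≤ M ∧ M ≤ G ∧ M.relIndex G = 0} with hS
  have hub : ∀ c ⊆ S, IsChain (· ≤ ·) c → ∀ y ∈ c, ∃ ub ∈ S, ∀ z ∈ c, z ≤ ub := by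
    intro c hcS hchain M₀ hM₀
    haveI : Nonempty ↥c := ⟨⟨M₀, hM₀⟩⟩
    have hdir : Directed (· ≤ ·) (fun M : ↥c => (M : Subgroup P)) := hchain.directed
    set U : Subgroup P := ⨆ M : ↥c, (M : Subgroup P) with hU
    have hmemU : ∀ x : P, x ∈ U ↔ ∃ M : ↥c, x ∈ (M : Subgroup P) := fun x =>
      Subgroup.mem_iSup_of_directed hdir
    have hUG : U ≤ G := iSup_le fun M => (hcS M.2).2.1
    have hHU : H ≤ U := le_trans (hcS hM₀).1 (le_iSup (fun M : ↥c => (M : Subgroup P)) ⟨M₀, hM₀⟩)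
    refine ⟨U, ⟨hHU, hUG, ?_⟩, fun z hz => le_iSup (fun M : ↥c => (M : Subgroup P)) ⟨z, hz⟩⟩
    by_contra h0
    haveI : Group.FG ↥G := hfg
    haveI : (U.subgroupOf G).FiniteIndex := ⟨h0⟩
    have hfgU : Group.FG ↥(U.subgroupOf G) := Subgroup.fg_of_index_ne_zero (U.subgroupOf G)
    have hfgU' : (U.subgroupOf G).FG := (Group.fg_iff_subgroup_fg _).mp hfgU
    obtain ⟨T, hT⟩ := hfgU'
    have hchoice : ∀ t ∈ T, ∃ M : ↥c, (t : P) ∈ (M : Subgroup P) := by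
      intro t ht
      have : t ∈ U.subgroupOf G := hT ▸ Subgroup.subset_closure ht
      exact (hmemU t.1).mp (Subgroup.mem_subgroupOf.mp this)
    choose! fM hfM using hchoice
    obtain ⟨z, hz⟩ := hdir.finset_le (T.attach.image (fun t => fM t.1))
    have hTz : ∀ t ∈ T, (t : P) ∈ (z : Subgroup P) := by
      intro t ht
      have hle := hz (fM t) (Finset.mem_image.mpr ⟨⟨t, ht⟩, Finset.mem_attach _ _, rfl⟩)
      exact hle (hfM t ht)
    have hUz : U.subgroupOf G ≤ (z : Subgroup P).subgroupOf G := by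
      rw [← hT]
      rw [Subgroup.closure_le]
      intro t ht
      exact Subgroup.mem_subgroupOf.mpr (hTz t ht)
    have hzrel : (z : Subgroup P).relIndex G = 0 := (hcS z.2).2.2
    have hdvd := Subgroup.index_dvd_of_le hUz
    rw [show ((z : Subgroup P).subgroupOf G).index = (z : Subgroup P).relIndex G from rfl,
      hzrel] at hdvd
    exact h0 (zero_dvd_iff.mp hdvd)
  obtain ⟨W, hHW, hWmax⟩ := zorn_le_nonempty₀ S hub H ⟨le_refl H, hHG, hH⟩
  refine ⟨W, hHW, hWmax.prop.2.1, hWmax.prop.2.2, ?_⟩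
  intro M hMG hWM h0
  have hMS : M ∈ S := ⟨le_trans hHW (le_of_lt hWM), hMG, h0⟩
  exact absurd (hWmax.le_of_ge hMS (le_of_lt hWM)) (not_le_of_gt hWM)

lemma raySegment_length (ξ : ℕ → Fin d) (n : ℕ) : (raySegment ξ n).length = n := by
  simp [raySegment]

lemma rayStab_relindex_zero (hd : 2 ≤ d) (hGK : IsRegularBranch d G K) (ξ : ℕ → Fin d) :
    (rayStab G ξ).relIndex G = 0 := by
  by_contra h0
  set m := (rayStab G ξ).relIndex G with hm
  have hcard : Nat.card (↥G ⧸ (rayStab G ξ).subgroupOf G) = m := by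
    rw [← Subgroup.index_eq_card]; rfl
  have hfin : Finite (↥G ⧸ (rayStab G ξ).subgroupOf G) :=
    (Nat.card_ne_zero.mp (by rw [hcard]; exact h0)).2
  have hchoice : ∀ t : Fin m → Fin d, ∃ g ∈ G, g (raySegment ξ m) = List.ofFn t := by
    intro t
    exact hGK.transitive (raySegment ξ m) (List.ofFn t)
      (by rw [raySegment_length, List.length_ofFn])
  choose gf hgf1 hgf2 using hchoice
  have hinj : Function.Injective
      (fun t : Fin m → Fin d => (QuotientGroup.mk ⟨gf t, hgf1 t⟩ :
        ↥G ⧸ (rayStab G ξ).subgroupOf G)) := by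
    intro t s h
    have hmem := Subgroup.mem_subgroupOf.mp (QuotientGroup.eq.mp h)
    have hseg := hmem.2 m
    have : gf s (raySegment ξ m) = gf t (raySegment ξ m) := by
      have h1 : ((gf t)⁻¹ * gf s) (raySegment ξ m) = raySegment ξ m := hseg
      have h2 : (gf t)⁻¹ (gf s (raySegment ξ m)) = raySegment ξ m := h1
      have h3 := congrArg (gf t) h2
      rwa [perm_apply_inv_self] at h3
    rw [hgf2 t, hgf2 s] at this
    exact funext fun i => congrFun (List.ofFn_inj.mp this.symm) i
  have hle := Nat.card_le_card_of_injective _ hinj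
  rw [hcard] at hle
  have hcard2 : Nat.card (Fin m → Fin d) = d ^ m := by
    rw [Nat.card_eq_fintype_card, Fintype.card_fun, Fintype.card_fin, Fintype.card_fin]
  rw [hcard2] at hle
  have h2m : 2 ^ m ≤ d ^ m := Nat.pow_le_pow_left hd m
  have := Nat.lt_two_pow_self (n := m)
  omega

end AuxZorn
section AuxConstruction

variable {d : ℕ} {G K Q : Subgroup (Equiv.Perm (Vtx d))}

/-- The set of vertices whose `Q`-orbit avoids the ray `ζ`. -/
def Aset (Q : Subgroup (Equiv.Perm (Vtx d))) (ζ : ℕ → Fin d) : Set (Vtx d) :=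
  {v | ∀ q ∈ Q, q v ≠ raySegment ζ v.length}

/-- The subgroup generated by rigid stabilizers of vertices avoiding the `Q`-orbit
of the ray. -/
def Ngrp (G Q : Subgroup (Equiv.Perm (Vtx d))) (ζ : ℕ → Fin d) : Subgroup (Equiv.Perm (Vtx d)) :=
  Subgroup.closure (⋃ v ∈ Aset Q ζ, (rist G v : Set (Equiv.Perm (Vtx d))))

/-- The seed subgroup `⟨Q, Ngrp⟩`. -/
def Ygrp (G Q : Subgroup (Equiv.Perm (Vtx d))) (ζ : ℕ → Fin d) : Subgroup (Equiv.Perm (Vtx d)) :=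
  Subgroup.closure ((Q : Set (Equiv.Perm (Vtx d))) ∪
    ⋃ v ∈ Aset Q ζ, (rist G v : Set (Equiv.Perm (Vtx d))))

lemma raySegment_take (ζ : ℕ → Fin d) {m n : ℕ} (h : m ≤ n) :
    (raySegment ζ n).take m = raySegment ζ m := by
  apply List.ext_getElem
  · simp [raySegment]; omega
  · intro i h1 h2
    simp [raySegment, List.getElem_take]

lemma rist_le_rayStab {ζ : ℕ → Fin d} {v : Vtx d} (hv : v ∈ Aset Q ζ) :
    rist G v ≤ rayStab G ζ := by
  rintro g ⟨hgG, hsupp⟩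
  refine ⟨hgG, fun n => ?_⟩
  refine hsupp _ (fun hpre => ?_)
  have hlen : v.length ≤ n := by
    have := hpre.length_le
    rwa [raySegment_length] at this
  have hv' : v = raySegment ζ v.length := by
    have := List.prefix_iff_eq_take.mp hpre
    rwa [raySegment_take ζ hlen] at this
  exact hv 1 Q.one_mem (by rw [← hv']; rfl)

lemma Ngrp_le_rayStab (ζ : ℕ → Fin d) : Ngrp G Q ζ ≤ rayStab G ζ := by
  rw [Ngrp, Subgroup.closure_le]
  intro g hg
  obtain ⟨s, ⟨v, rfl⟩, hs⟩ := hg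
  simp only [Set.mem_iUnion] at hs
  obtain ⟨hv, hgv⟩ := hs
  exact rist_le_rayStab hv hgv

lemma Ygrp_le_G (hGK : IsRegularBranch d G K) (hQG : Q ≤ G) (ζ : ℕ → Fin d) :
    Ygrp G Q ζ ≤ G := by
  rw [Ygrp, Subgroup.closure_le]
  rintro g (hg | hg)
  · exact hQG hg
  · obtain ⟨s, ⟨v, rfl⟩, hs⟩ := hg
    simp only [Set.mem_iUnion] at hs
    exact hs.choose_spec.1

lemma Aset_inv (hGK : IsRegularBranch d G K) (hQG : Q ≤ G) {ζ : ℕ → Fin d} {v : Vtx d}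
    (hv : v ∈ Aset Q ζ) {q : Equiv.Perm (Vtx d)} (hq : q ∈ Q) : q v ∈ Aset Q ζ := by
  intro q' hq' h
  have hlen : (q v).length = v.length := treeAut_length (hGK.treeAut q (hQG hq)) v
  rw [hlen] at h
  exact hv (q' * q) (Q.mul_mem hq' hq) h

lemma rist_conj (hGK : IsRegularBranch d G K) (hQG : Q ≤ G) {q g : Equiv.Perm (Vtx d)}
    (hq : q ∈ Q) {v : Vtx d} (hg : g ∈ rist G v) : q * g * q⁻¹ ∈ rist G (q v) := by
  obtain ⟨hgG, hsupp⟩ := hg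
  refine ⟨G.mul_mem (G.mul_mem (hQG hq) hgG) (G.inv_mem (hQG hq)), fun w hw => ?_⟩
  show q (g (q⁻¹ w)) = w
  have hfix : g (q⁻¹ w) = q⁻¹ w := by
    refine hsupp _ (fun hpre => hw ?_)
    obtain ⟨t, ht⟩ := hpre
    obtain ⟨s, _, hs⟩ := treeAut_append (hGK.treeAut q (hQG hq)) v t
    refine ⟨s, ?_⟩
    rw [← hs, ht]
    exact perm_apply_inv_self q w
  rw [hfix]
  exact perm_apply_inv_self q w

lemma Ngrp_conj (hGK : IsRegularBranch d G K) (hQG : Q ≤ G) {ζ : ℕ → Fin d}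
    {q : Equiv.Perm (Vtx d)} (hq : q ∈ Q) :
    ∀ g ∈ Ngrp G Q ζ, q * g * q⁻¹ ∈ Ngrp G Q ζ := by
  intro g hg
  induction hg using Subgroup.closure_induction with
  | mem x hx =>
    obtain ⟨s, ⟨v, rfl⟩, hs⟩ := hx
    simp only [Set.mem_iUnion] at hs
    obtain ⟨hv, hxv⟩ := hs
    refine Subgroup.subset_closure ?_
    refine Set.mem_biUnion (Aset_inv hGK hQG hv hq) ?_
    exact rist_conj hGK hQG hq hxv
  | one => simpa using Subgroup.one_mem _
  | mul x y hx hy ihx ihy =>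
    have : q * (x * y) * q⁻¹ = (q * x * q⁻¹) * (q * y * q⁻¹) := by group
    rw [this]
    exact Subgroup.mul_mem _ ihx ihy
  | inv x hx ihx =>
    have : q * x⁻¹ * q⁻¹ = (q * x * q⁻¹)⁻¹ := by group
    rw [this]
    exact Subgroup.inv_mem _ ihx

lemma Ngrp_le_Ygrp (ζ : ℕ → Fin d) : Ngrp G Q ζ ≤ Ygrp G Q ζ := by
  rw [Ngrp, Ygrp]
  exact Subgroup.closure_mono Set.subset_union_right

lemma Q_le_Ygrp (ζ : ℕ → Fin d) : Q ≤ Ygrp G Q ζ := by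
  intro q hq
  exact Subgroup.subset_closure (Or.inl hq)

lemma rist_le_Ygrp {ζ : ℕ → Fin d} {v : Vtx d} (hv : v ∈ Aset Q ζ) :
    rist G v ≤ Ygrp G Q ζ := by
  intro g hg
  exact Subgroup.subset_closure (Or.inr (Set.mem_biUnion hv hg))

lemma Ygrp_decomp (hGK : IsRegularBranch d G K) (hQG : Q ≤ G) (ζ : ℕ → Fin d) :
    ∀ y ∈ Ygrp G Q ζ, ∃ q ∈ Q, q⁻¹ * y ∈ Ngrp G Q ζ := by
  intro y hy
  induction hy using Subgroup.closure_induction with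
  | mem x hx =>
    rcases hx with hx | hx
    · exact ⟨x, hx, by simpa using Subgroup.one_mem _⟩
    · exact ⟨1, Q.one_mem, by rw [inv_one, one_mul]; exact Subgroup.subset_closure hx⟩
  | one => exact ⟨1, Q.one_mem, by simpa using Subgroup.one_mem _⟩
  | mul x y hx hy ihx ihy =>
    obtain ⟨q, hq, hn⟩ := ihx
    obtain ⟨q', hq', hn'⟩ := ihy
    refine ⟨q * q', Q.mul_mem hq hq', ?_⟩
    have : (q * q')⁻¹ * (x * y) = (q'⁻¹ * (q⁻¹ * x) * q') * (q'⁻¹ * y) := by group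
    rw [this]
    exact Subgroup.mul_mem _ (by
      have := Ngrp_conj hGK hQG (Q.inv_mem hq') _ hn
      simpa [mul_assoc] using this) hn'
  | inv x hx ihx =>
    obtain ⟨q, hq, hn⟩ := ihx
    refine ⟨q⁻¹, Q.inv_mem hq, ?_⟩
    have : (q⁻¹)⁻¹ * x⁻¹ = (q * (q⁻¹ * x)⁻¹ * q⁻¹) := by group
    rw [this]
    exact Ngrp_conj hGK hQG hq _ (Subgroup.inv_mem _ hn)

lemma Ygrp_relindex_zero (hd : 2 ≤ d) (hGK : IsRegularBranch d G K) (hQG : Q ≤ G)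
    (hQfin : (Q : Set (Equiv.Perm (Vtx d))).Finite) (ζ : ℕ → Fin d) :
    (Ygrp G Q ζ).relIndex G = 0 := by
  by_contra h0
  have hNY : Ngrp G Q ζ ≤ Ygrp G Q ζ := Ngrp_le_Ygrp ζ
  have hYG : Ygrp G Q ζ ≤ G := Ygrp_le_G hGK hQG ζ
  -- N has finite index in Y since Y = Q · N
  have hsurj : Function.Surjective
      (fun q : ↥(Q : Set (Equiv.Perm (Vtx d))) =>
        (QuotientGroup.mk ⟨q.1, Q_le_Ygrp ζ q.2⟩ :
          ↥(Ygrp G Q ζ) ⧸ (Ngrp G Q ζ).subgroupOf (Ygrp G Q ζ))) := by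
    intro x
    obtain ⟨q, hq, hn⟩ := Ygrp_decomp hGK hQG ζ (Quotient.out x).1 (Quotient.out x).2
    refine ⟨⟨q, hq⟩, ?_⟩
    rw [← QuotientGroup.out_eq' x]
    exact QuotientGroup.eq.mpr (Subgroup.mem_subgroupOf.mpr hn)
  haveI : Finite ↥(Q : Set (Equiv.Perm (Vtx d))) := hQfin.to_subtype
  have hfin : Finite (↥(Ygrp G Q ζ) ⧸ (Ngrp G Q ζ).subgroupOf (Ygrp G Q ζ)) :=
    Finite.of_surjective _ hsurj
  have hNYrel : (Ngrp G Q ζ).relIndex (Ygrp G Q ζ) ≠ 0 := by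
    show ((Ngrp G Q ζ).subgroupOf (Ygrp G Q ζ)).index ≠ 0
    rw [Subgroup.index_eq_card]
    exact Nat.card_ne_zero.mpr ⟨⟨QuotientGroup.mk 1⟩, hfin⟩
  have hNG : (Ngrp G Q ζ).relIndex G = 0 := by
    have h := Subgroup.relIndex_mul_relIndex (Ngrp G Q ζ) (rayStab G ζ) G
      (Ngrp_le_rayStab ζ) (fun g hg => hg.1)
    rw [rayStab_relindex_zero hd hGK ζ, mul_zero] at h
    exact h.symm
  have h := Subgroup.relIndex_mul_relIndex (Ngrp G Q ζ) (Ygrp G Q ζ) G hNY hYG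
  rw [hNG] at h
  exact absurd h (by
    intro heq
    exact (Nat.mul_ne_zero hNYrel h0) heq)

end AuxConstruction
section AuxMain

variable {d : ℕ} {G K Q : Subgroup (Equiv.Perm (Vtx d))}

lemma raySegment_succ (ζ : ℕ → Fin d) (n : ℕ) :
    raySegment ζ (n + 1) = raySegment ζ n ++ [ζ n] := by
  show List.ofFn _ = _
  rw [List.ofFn_succ']
  simp [raySegment, List.concat_eq_append]

lemma ray_map_mono (hGK : IsRegularBranch d G K) {g : Equiv.Perm (Vtx d)} (hg : g ∈ G)
    {ζ η : ℕ → Fin d} {n : ℕ}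
    (h : g (raySegment ζ (n + 1)) = raySegment η (n + 1)) :
    g (raySegment ζ n) = raySegment η n := by
  obtain ⟨y, hy⟩ := (hGK.treeAut g hg).2 (raySegment ζ n) (ζ n)
  rw [raySegment_succ, raySegment_succ, hy] at h
  exact (List.append_inj h
    (by rw [treeAut_length (hGK.treeAut g hg), raySegment_length, raySegment_length])).1

lemma ray_map_down (hGK : IsRegularBranch d G K) {g : Equiv.Perm (Vtx d)} (hg : g ∈ G)
    (ζ η : ℕ → Fin d) :
    ∀ m n, n ≤ m → g (raySegment ζ m) = raySegment η m →
      g (raySegment ζ n) = raySegment η n := by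
  intro m
  induction m with
  | zero =>
    intro n hn h
    have : n = 0 := by omega
    subst this
    exact h
  | succ m ih =>
    intro n hn h
    rcases Nat.eq_or_lt_of_le hn with heq | hlt
    · subst heq; exact h
    · exact ih n (by omega) (ray_map_mono hGK hg h)

end AuxMain
/-- If a finitely generated regular branch group `G` contains a finite subgroup `Q`
fixing no boundary point, then the set of non-parabolic weakly maximal subgroups of `G`
containing `Q` is uncountable. -/
theorem uncountable_nonparabolic_weaklyMaximal {d : ℕ} (hd : 2 ≤ d)
    (G K : Subgroup (Equiv.Perm (Vtx d))) (hGK : IsRegularBranch d G K)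
    (hfg : Group.FG G) (Q : Subgroup (Equiv.Perm (Vtx d))) (hQG : Q ≤ G)
    (hQfin : (Q : Set (Equiv.Perm (Vtx d))).Finite)
    (hQnofix : ∀ ξ : ℕ → Fin d, ∃ g ∈ Q, ∃ n : ℕ,
      g (raySegment ξ n) ≠ raySegment ξ n) :
    ¬ ({W : Subgroup (Equiv.Perm (Vtx d)) | IsWeaklyMaximalIn G W ∧ Q ≤ W ∧
        ∀ ξ : ℕ → Fin d, W ≠ rayStab G ξ}).Countable := by
  classical
  intro hcnt
  -- for every ray we choose a weakly maximal subgroup over the seed group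
  have hWex : ∀ ζ : ℕ → Fin d, ∃ W : Subgroup (Equiv.Perm (Vtx d)),
      (IsWeaklyMaximalIn G W ∧ Q ≤ W ∧ ∀ ξ : ℕ → Fin d, W ≠ rayStab G ξ) ∧
        Ygrp G Q ζ ≤ W := by
    intro ζ
    obtain ⟨W, hYW, hwm⟩ := exists_weaklyMaximal G hfg (Ygrp G Q ζ)
      (Ygrp_le_G hGK hQG ζ) (Ygrp_relindex_zero hd hGK hQG hQfin ζ)
    refine ⟨W, ⟨hwm, le_trans (Q_le_Ygrp ζ) hYW, ?_⟩, hYW⟩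
    intro ξ hWξ
    obtain ⟨q, hq, n, hn⟩ := hQnofix ξ
    have hqW : q ∈ rayStab G ξ := hWξ ▸ (le_trans (Q_le_Ygrp ζ) hYW) hq
    exact hn (hqW.2 n)
  choose Φ hΦ1 hΦ2 using hWex
  -- equal choices force the rays to be in the same `Q`-orbit
  have hkey : ∀ ζ η : ℕ → Fin d, Φ ζ = Φ η → ∃ q ∈ Q, ∃ q' ∈ Q,
      ∀ n : ℕ, (q' * q⁻¹) (raySegment ζ n) = raySegment η n := by
    intro ζ η hΦeq
    by_contra hno
    push_neg at hno
    have hex : ∀ p : Equiv.Perm (Vtx d) × Equiv.Perm (Vtx d), ∃ n : ℕ,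
        p.1 ∈ Q → p.2 ∈ Q → (p.2 * p.1⁻¹) (raySegment ζ n) ≠ raySegment η n := by
      intro p
      by_cases h1 : p.1 ∈ Q
      · by_cases h2 : p.2 ∈ Q
        · obtain ⟨n, hn⟩ := hno p.1 h1 p.2 h2
          exact ⟨n, fun _ _ => hn⟩
        · exact ⟨0, fun _ h => absurd h h2⟩
      · exact ⟨0, fun h _ => absurd h h1⟩
    choose nf hnf using hex
    have hSfin : (((Q : Set (Equiv.Perm (Vtx d)))) ×ˢ
        ((Q : Set (Equiv.Perm (Vtx d))))).Finite := hQfin.prod hQfin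
    obtain ⟨b, hb⟩ := (hSfin.image nf).bddAbove
    have hcover : ∀ v : Vtx d, v.length = b + 1 → v ∈ Aset Q ζ ∨ v ∈ Aset Q η := by
      intro v hv
      by_contra hcon
      push_neg at hcon
      obtain ⟨h1, h2⟩ := hcon
      simp only [Aset, Set.mem_setOf_eq] at h1 h2
      push_neg at h1 h2
      obtain ⟨q, hq, hqv⟩ := h1
      obtain ⟨q', hq', hq'v⟩ := h2
      rw [hv] at hqv hq'v
      have hmapN : (q' * q⁻¹) (raySegment ζ (b + 1)) = raySegment η (b + 1) := by
        show q' (q⁻¹ (raySegment ζ (b + 1))) = _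
        have hinv : q⁻¹ (raySegment ζ (b + 1)) = v := by
          rw [← hqv]; exact perm_inv_apply_self q v
        rw [hinv, hq'v]
      have hle : nf (q, q') ≤ b :=
        hb (Set.mem_image_of_mem nf (Set.mem_prod.mpr ⟨hq, hq'⟩))
      have hdown := ray_map_down hGK
        (G.mul_mem (hQG hq') (G.inv_mem (hQG hq))) ζ η (b + 1) (nf (q, q'))
        (by omega) hmapN
      exact hnf (q, q') hq hq' hdown
    have hKAtW : ∀ u : Level d (b + 1), KAt K u.1 ≤ Φ ζ := by
      intro u
      rcases hcover u.1 u.2 with h | h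
      · exact le_trans (KAt_le_rist hGK u.1)
          (le_trans (rist_le_Ygrp h) (hΦ2 ζ))
      · exact le_trans (KAt_le_rist hGK u.1)
          (le_trans (rist_le_Ygrp h) (hΦeq ▸ hΦ2 η))
    have hDnW : Dn K (b + 1) ≤ Φ ζ :=
      le_trans (Dn_le_iSup_KAt hGK (b + 1)) (iSup_le hKAtW)
    have hWG : Φ ζ ≤ G := (hΦ1 ζ).1.1
    have hrel0 : (Φ ζ).relIndex G = 0 := (hΦ1 ζ).1.2.1
    have h := Subgroup.relIndex_mul_relIndex (Dn K (b + 1)) (Φ ζ) G hDnW hWG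
    rw [hrel0, mul_zero] at h
    exact relindex_Dn hGK b h.symm
  -- countability contradiction
  have h0d : 0 < d := by omega
  have hsub : (Set.univ : Set (ℕ → Fin d)) ⊆
      ⋃ W ∈ {W : Subgroup (Equiv.Perm (Vtx d)) | IsWeaklyMaximalIn G W ∧ Q ≤ W ∧
        ∀ ξ : ℕ → Fin d, W ≠ rayStab G ξ}, {ζ : ℕ → Fin d | Φ ζ = W} := by
    intro ζ _
    exact Set.mem_biUnion (hΦ1 ζ) rfl
  have hfiber : ∀ W ∈ {W : Subgroup (Equiv.Perm (Vtx d)) | IsWeaklyMaximalIn G W ∧ Q ≤ W ∧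
      ∀ ξ : ℕ → Fin d, W ≠ rayStab G ξ}, {ζ : ℕ → Fin d | Φ ζ = W}.Countable := by
    intro W _
    by_cases hne : {ζ : ℕ → Fin d | Φ ζ = W}.Nonempty
    · obtain ⟨ζ₀, hζ₀⟩ := hne
      set e : Equiv.Perm (Vtx d) × Equiv.Perm (Vtx d) → (ℕ → Fin d) :=
        fun p => fun n : ℕ =>
          ((p.2 * p.1⁻¹) (raySegment ζ₀ (n + 1))).getD n ⟨0, h0d⟩ with he
      have hsubset : {ζ : ℕ → Fin d | Φ ζ = W} ⊆
          e '' (((Q : Set (Equiv.Perm (Vtx d)))) ×ˢ ((Q : Set (Equiv.Perm (Vtx d))))) := by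
        intro η hη
        obtain ⟨q, hq, q', hq', hall⟩ := hkey ζ₀ η (hζ₀.trans hη.symm)
        refine ⟨(q, q'), Set.mem_prod.mpr ⟨hq, hq'⟩, funext fun n => ?_⟩
        show ((q' * q⁻¹) (raySegment ζ₀ (n + 1))).getD n ⟨0, h0d⟩ = η n
        rw [hall (n + 1)]
        have hlen : n < (raySegment η (n + 1)).length := by
          rw [raySegment_length]; omega
        rw [List.getD_eq_getElem _ _ hlen]
        show (List.ofFn fun i : Fin (n + 1) => η i)[n]'(by simpa using hlen) = η n
        rw [List.getElem_ofFn]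
      exact Set.Countable.mono hsubset ((hQfin.prod hQfin).image e).countable
    · rw [Set.not_nonempty_iff_eq_empty] at hne
      rw [hne]
      exact Set.countable_empty
  have huniv : (Set.univ : Set (ℕ → Fin d)).Countable :=
    Set.Countable.mono hsub (Set.Countable.biUnion hcnt hfiber)
  have hctble : Countable (ℕ → Fin d) := Set.countable_univ_iff.mp huniv
  obtain ⟨gn, hgn⟩ := (countable_iff_exists_injective (ℕ → Fin d)).mp hctble
  have hinj : Function.Injective
      (fun (S : Set ℕ) => fun n : ℕ =>
        if n ∈ S then (⟨1, by omega⟩ : Fin d) else ⟨0, by omega⟩) := by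
    intro S S' h
    ext n
    have hfn := congrFun h n
    by_cases hn : n ∈ S <;> by_cases hn' : n ∈ S' <;>
      simp [hn, hn', Fin.ext_iff] at hfn ⊢
  exact Function.cantor_injective _ (hgn.comp hinj)
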